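/- Let G = C⃗ₙ^S with s, t, r ∈ S satisfying r ≡ s + t (mod n). Define P^{s,t} = Σ_{a ∈ ℤ/nℤ} e_{a, a+s, a+r, a+r+s}. Then ∂P^{s,t} = W^{s,r} − W^{s,t}, where W^{x,y} = Σ_a (e_{a,a+x,a+x+y} − e_{a,a+y,a+x+y}). -/
import Mathlib


/-- The GLMY boundary: `bdry V K m` maps the free `K`-space on paths with `m+2` vertices to
the free `K`-space on paths with `m+1` vertices, by the alternating sum of vertex deletions. -/
noncomputable def bdry (V : Type) (K : Type) [Field K] (m : ℕ) :
    ((Fin (m + 2) → V) →₀ K) →ₗ[K] ((Fin (m + 1) → V) →₀ K) :=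
  Finsupp.lsum K fun p =>
    ∑ j : Fin (m + 2), ((-1 : K) ^ (j : ℕ)) • Finsupp.lsingle (fun i => p (j.succAbove i))

/-- `W^{x,y} = Σ_a (e_{a,a+x,a+x+y} - e_{a,a+y,a+x+y})`. -/
noncomputable def Wcycle (n : ℕ) [NeZero n] (K : Type) [Field K] (x y : ZMod n) :
    (Fin 3 → ZMod n) →₀ K :=
  ∑ a : ZMod n,
    (Finsupp.single ![a, a + x, a + x + y] 1 - Finsupp.single ![a, a + y, a + x + y] 1)

/-- `P^{s,t} = Σ_a e_{a,a+s,a+r,a+r+s}`. -/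
noncomputable def Pchain (n : ℕ) [NeZero n] (K : Type) [Field K] (s r : ZMod n) :
    (Fin 4 → ZMod n) →₀ K :=
  ∑ a : ZMod n, Finsupp.single ![a, a + s, a + r, a + r + s] 1

lemma face0 {V : Type} (p : Fin 4 → V) :
    (fun i => p ((0 : Fin 4).succAbove i)) = ![p 1, p 2, p 3] := by
  funext i; fin_cases i <;> rfl

lemma face1 {V : Type} (p : Fin 4 → V) :
    (fun i => p ((1 : Fin 4).succAbove i)) = ![p 0, p 2, p 3] := by
  funext i; fin_cases i <;> rfl

lemma face2 {V : Type} (p : Fin 4 → V) :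
    (fun i => p ((2 : Fin 4).succAbove i)) = ![p 0, p 1, p 3] := by
  funext i; fin_cases i <;> rfl

lemma face3 {V : Type} (p : Fin 4 → V) :
    (fun i => p ((3 : Fin 4).succAbove i)) = ![p 0, p 1, p 2] := by
  funext i; fin_cases i <;> rfl

set_option maxHeartbeats 2000000 in
/-- If `r = s + t` in `ZMod n` with `s, t, r ∈ S`, then `∂ P^{s,t} = W^{s,r} - W^{s,t}`. -/
theorem boundary_Pchain (n : ℕ) [NeZero n] (hn : 3 ≤ n) (K : Type) [Field K] [CharZero K]
    (S : Set (ZMod n)) (s t r : ZMod n) (hs : s ∈ S) (ht : t ∈ S) (hr : r ∈ S)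
    (hsum : r = s + t) :
    bdry (ZMod n) K 2 (Pchain n K s r) = Wcycle n K s r - Wcycle n K s t := by
  subst hsum
  have hb : ∀ a : ZMod n,
      bdry (ZMod n) K 2 (Finsupp.single ![a, a + s, a + (s + t), a + (s + t) + s] (1 : K)) =
      Finsupp.single ![a + s, a + (s + t), a + (s + t) + s] 1
        - Finsupp.single ![a, a + (s + t), a + (s + t) + s] 1
        + Finsupp.single ![a, a + s, a + (s + t) + s] 1
        - Finsupp.single ![a, a + s, a + (s + t)] 1 := by
    intro a
    rw [bdry, Finsupp.lsum_single]
    rw [LinearMap.sum_apply, Fin.sum_univ_four]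
    simp only [LinearMap.smul_apply, Finsupp.lsingle_apply, face0, face1, face2, face3,
      show ((0 : Fin 4) : ℕ) = 0 from rfl, show ((1 : Fin 4) : ℕ) = 1 from rfl,
      show ((2 : Fin 4) : ℕ) = 2 from rfl, show ((3 : Fin 4) : ℕ) = 3 from rfl]
    norm_num [Matrix.cons_val_zero, Matrix.cons_val_one, Matrix.head_cons]
    abel
  rw [Pchain, map_sum]
  simp only [hb]
  have shift : ∑ a : ZMod n, Finsupp.single ![a + s, a + (s + t), a + (s + t) + s] (1 : K)
      = ∑ a : ZMod n, Finsupp.single ![a, a + t, a + t + s] (1 : K) := by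
    apply Fintype.sum_equiv (Equiv.addRight s)
    intro a
    congr 1
    funext i
    fin_cases i <;> simp [Equiv.coe_addRight] <;> ring
  have norm3 : ∀ f g : ZMod n → Fin 3 → ZMod n, (∀ a, f a = g a) →
      ∑ a : ZMod n, Finsupp.single (f a) (1 : K) = ∑ a : ZMod n, Finsupp.single (g a) 1 :=
    fun f g h => Finset.sum_congr rfl fun a _ => by rw [h a]
  rw [Wcycle, Wcycle]
  simp only [Finset.sum_sub_distrib, Finset.sum_add_distrib]
  rw [shift]
  rw [norm3 (fun a => ![a, a + t, a + t + s]) (fun a => ![a, a + t, a + s + t])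
      (fun a => by funext i; fin_cases i <;> simp <;> ring),
    norm3 (fun a => ![a, a + (s + t), a + (s + t) + s]) (fun a => ![a, a + (s + t), a + s + (s + t)])
      (fun a => by funext i; fin_cases i <;> simp <;> ring),
    norm3 (fun a => ![a, a + s, a + (s + t) + s]) (fun a => ![a, a + s, a + s + (s + t)])
      (fun a => by funext i; fin_cases i <;> simp <;> ring),
    norm3 (fun a => ![a, a + s, a + (s + t)]) (fun a => ![a, a + s, a + s + t])
      (fun a => by funext i; fin_cases i <;> simp <;> ring)]
  abel
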